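/- Let (H, μ) be a commutative Hilbertian Frobenius semigroup. Then (H, μ) is radical (equal to its Jacobson radical) if and only if μ = 0. -/

import Mathlib

open scoped ComplexInnerProductSpace

/-- `x` is group-like: `x ≠ 0` and `μ†(x) = x ⊗ x`, i.e.
`⟨μ(u ⊗ v), x⟩ = ⟨u, x⟩⟨v, x⟩` for all `u v`. -/
def IsGrouplike {H : Type*} [NormedAddCommGroup H] [InnerProductSpace ℂ H]
    (m : H →L[ℂ] H →L[ℂ] H) (x : H) : Prop :=
  x ≠ 0 ∧ ∀ u v : H, ⟪x, m u v⟫ = ⟪x, u⟫ * ⟪x, v⟫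

/-- A commutative Hilbertian Frobenius semigroup (Frobenius via the
equivalent `H*`-adjoint formulation) is radical — its Jacobson radical, the orthogonal
complement of the set of group-like elements, is the whole space — iff `μ = 0`. -/
theorem stmt_13 {H : Type*} [NormedAddCommGroup H] [InnerProductSpace ℂ H] [CompleteSpace H]
    (m : H →L[ℂ] H →L[ℂ] H)
    (hcomm : ∀ u v : H, m u v = m v u)
    (hassoc : ∀ u v w : H, m (m u v) w = m u (m v w))
    (hfrob : ∀ u : H, ∃ us : H, ∀ v w : H, ⟪m u v, w⟫ = ⟪v, m us w⟫) :
    ({u : H | ∀ x : H, IsGrouplike m x → ⟪x, u⟫ = 0} = Set.univ) ↔ m = 0 := by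
  constructor
  · intro hset
    by_contra hm
    -- there is some `u` with `L_u = m u ≠ 0`
    have hex : ∃ u : H, (m u : H →L[ℂ] H) ≠ 0 := by
      by_contra h
      push_neg at h
      exact hm (by ext u v; simp [h u])
    obtain ⟨u, hu⟩ := hex
    -- the range of `L` is star-closed (Frobenius condition)
    have hstar : ∀ a : H, ∃ b : H, star (m a) = m b := by
      intro a
      obtain ⟨b, hb⟩ := hfrob a
      refine ⟨b, ?_⟩
      have hadj : m a = ContinuousLinearMap.adjoint (m b) :=
        (ContinuousLinearMap.eq_adjoint_iff (m a) (m b)).2 hb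
      rw [ContinuousLinearMap.star_eq_adjoint, hadj, ContinuousLinearMap.adjoint_adjoint]
    set s : Set (H →L[ℂ] H) := Set.range (fun a : H => m a) with hs_def
    have hmul : ∀ a b : H, (m a) * (m b) = m (m a b) := by
      intro a b
      ext v
      simp only [ContinuousLinearMap.mul_apply]
      exact (hassoc a b v).symm
    have hc : ∀ x : H →L[ℂ] H, x ∈ s → ∀ y : H →L[ℂ] H, y ∈ s → x * y = y * x := by
      rintro _ ⟨a, rfl⟩ _ ⟨b, rfl⟩
      show m a * m b = m b * m a
      rw [hmul, hmul, hcomm]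
    have hcstar : ∀ x : H →L[ℂ] H, x ∈ s → ∀ y : H →L[ℂ] H, y ∈ s → x * star y = star y * x := by
      rintro x hx _ ⟨b, rfl⟩
      obtain ⟨b', hb'⟩ := hstar b
      show x * star (m b) = star (m b) * x
      rw [hb']
      exact hc x hx _ ⟨b', rfl⟩
    set Aalg := (StarAlgebra.adjoin ℂ s).topologicalClosure with hAalg_def
    haveI hclosed : IsClosed (Aalg : Set (H →L[ℂ] H)) :=
      (StarAlgebra.adjoin ℂ s).isClosed_topologicalClosure
    have hmem : ∀ a : H, (m a : H →L[ℂ] H) ∈ Aalg := fun a =>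
      (StarAlgebra.adjoin ℂ s).le_topologicalClosure
        (StarAlgebra.subset_adjoin ℂ s ⟨a, rfl⟩)
    letI : CommRing (StarAlgebra.adjoin ℂ s) := StarAlgebra.adjoinCommRingOfComm ℂ hc hcstar
    letI : NormedCommRing Aalg :=
      { (inferInstance : NormedRing Aalg),
        (StarSubalgebra.commRingTopologicalClosure (StarAlgebra.adjoin ℂ s)
          (fun x y => mul_comm x y)) with }
    -- the element `w = u* · u`
    obtain ⟨us, hus⟩ := hfrob u
    have hstar_u : star (m u) = m us := by
      have hadj : m u = ContinuousLinearMap.adjoint (m us) :=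
        (ContinuousLinearMap.eq_adjoint_iff (m u) (m us)).2 hus
      rw [ContinuousLinearMap.star_eq_adjoint, hadj, ContinuousLinearMap.adjoint_adjoint]
    have hstar_us : star (m us) = m u := by
      rw [← hstar_u, star_star]
    set w : H := m us u with hw_def
    have hTeq : (m w : H →L[ℂ] H) = m us * m u := (hmul us u).symm
    have hTsa : star (m w : H →L[ℂ] H) = m w := by
      rw [hTeq, star_mul, hstar_u, hstar_us, ← hTeq]
    obtain ⟨v, hv⟩ : ∃ v : H, m u v ≠ 0 := by
      by_contra h
      push_neg at h
      exact hu (by ext v; simp [h v])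
    have hTv : ⟪v, m w v⟫ = ⟪m u v, m u v⟫ := by
      have h1 : m w v = m us (m u v) := hassoc us u v
      rw [h1]
      exact (hus v (m u v)).symm
    have hT0 : (m w : H →L[ℂ] H) ≠ 0 := by
      intro h
      apply hv
      rw [h] at hTv
      simp only [ContinuousLinearMap.zero_apply, inner_zero_right] at hTv
      exact inner_self_eq_zero.mp hTv.symm
    set t : Aalg := ⟨m w, hmem w⟩ with ht_def
    have ht0 : t ≠ 0 := by
      intro h
      exact hT0 (congrArg Subtype.val h)
    haveI : Nontrivial Aalg := nontrivial_of_ne t 0 ht0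
    have htsa : IsSelfAdjoint t := Subtype.ext (by rw [StarMemClass.coe_star]; exact hTsa)
    have hrad := htsa.spectralRadius_eq_nnnorm
    obtain ⟨z, hz, hznorm⟩ := spectrum.exists_nnnorm_eq_spectralRadius t
    have hz0 : z ≠ 0 := by
      intro h
      rw [h, hrad] at hznorm
      simp only [nnnorm_zero, ENNReal.coe_zero] at hznorm
      have : ‖t‖₊ = 0 := by exact_mod_cast hznorm.symm
      exact ht0 (by simpa using this)
    obtain ⟨φ, hφ⟩ := WeakDual.CharacterSpace.mem_spectrum_iff_exists.mp hz
    -- Riesz representation of `a ↦ φ (L_a)`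
    let j₀ : H →ₗ[ℂ] Aalg :=
      { toFun := fun a => ⟨m a, hmem a⟩
        map_add' := fun a b => Subtype.ext (by simp)
        map_smul' := fun c a => Subtype.ext (by simp) }
    have hj₀ : ∀ a : H, ‖j₀ a‖ ≤ ‖m‖ * ‖a‖ := fun a => m.le_opNorm a
    let j : H →L[ℂ] Aalg := j₀.mkContinuous ‖m‖ hj₀
    let g : H →L[ℂ] ℂ := (WeakDual.toStrongDual (φ : WeakDual ℂ Aalg)).comp j
    set x := (InnerProductSpace.toDual ℂ H).symm g with hx_def
    have hxval : ∀ a : H, ⟪x, a⟫ = φ (⟨m a, hmem a⟩ : Aalg) := fun a => by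
      rw [hx_def, InnerProductSpace.toDual_symm_apply]
      rfl
    have hxw : ⟪x, w⟫ = z := by rw [hxval w]; exact hφ
    have hx0 : x ≠ 0 := by
      intro h
      rw [h, inner_zero_left] at hxw
      exact hz0 hxw.symm
    have hgl : IsGrouplike m x := by
      refine ⟨hx0, fun a b => ?_⟩
      rw [hxval, hxval, hxval, ← map_mul φ]
      congr 1
      refine Subtype.ext ?_
      rw [MulMemClass.coe_mul]
      exact (hmul a b).symm
    have hcontra := (Set.eq_univ_iff_forall.mp hset x) x hgl
    exact hx0 (inner_self_eq_zero.mp hcontra)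
  · intro hm
    apply Set.eq_univ_iff_forall.mpr
    intro u x hx
    exfalso
    have h := hx.2 x x
    rw [hm] at h
    simp only [ContinuousLinearMap.zero_apply, inner_zero_right] at h
    exact hx.1 (inner_self_eq_zero.mp (mul_self_eq_zero.mp h.symm))
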